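/- Fix s > 0 and define J(s,ℓ) = Φ(−ℓ/(2√s)) + exp(ℓ²(s−1)/2) Φ(ℓ(1/(2√s) − √s)) for ℓ > 0. Then ℓ ↦ J(s,ℓ) is strictly decreasing on (0,∞). -/

import Mathlib

open Real Set MeasureTheory Filter Topology

noncomputable def Phi (x : ℝ) : ℝ :=
  (Real.sqrt (2 * Real.pi))⁻¹ * ∫ y in Set.Iic x, Real.exp (-y ^ 2 / 2)

/-- `J(s,ℓ) = Φ(−ℓ/(2√s)) + exp(ℓ²(s−1)/2) Φ(ℓ(1/(2√s) − √s))`. -/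
noncomputable def J (s ℓ : ℝ) : ℝ :=
  Phi (-ℓ / (2 * Real.sqrt s)) +
    Real.exp (ℓ ^ 2 * (s - 1) / 2) * Phi (ℓ * (1 / (2 * Real.sqrt s) - Real.sqrt s))

lemma gauss_int : Integrable (fun y : ℝ => Real.exp (-y ^ 2 / 2)) := by
  have h := integrable_exp_neg_mul_sq (by norm_num : (0:ℝ) < 1/2)
  have : (fun y : ℝ => Real.exp (-y ^ 2 / 2)) = fun y : ℝ => Real.exp (-(1/2) * y ^ 2) := by
    funext y; rw [show -y ^ 2 / 2 = -(1/2) * y ^ 2 by ring]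
  rw [this]; exact h

lemma gauss_cont : Continuous fun y : ℝ => Real.exp (-y ^ 2 / 2) := by continuity

lemma hasDerivAt_int (x : ℝ) :
    HasDerivAt (fun t : ℝ => ∫ y in Set.Iic t, Real.exp (-y ^ 2 / 2)) (Real.exp (-x ^ 2 / 2)) x := by
  have hint := gauss_int
  have h1 : HasDerivAt (fun t : ℝ => ∫ y in (0:ℝ)..t, Real.exp (-y ^ 2 / 2))
      (Real.exp (-x ^ 2 / 2)) x :=
    intervalIntegral.integral_hasDerivAt_right hint.intervalIntegrable
      (gauss_cont.stronglyMeasurableAtFilter _ _) gauss_cont.continuousAt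
  have h2 := h1.const_add (∫ y in Set.Iic (0:ℝ), Real.exp (-y ^ 2 / 2))
  refine h2.congr_of_eventuallyEq ?_
  filter_upwards with t
  have := intervalIntegral.integral_Iic_sub_Iic (hint.integrableOn (s := Set.Iic (0:ℝ)))
    (hint.integrableOn (s := Set.Iic t))
  linarith

lemma hasDerivAt_Phi (x : ℝ) :
    HasDerivAt Phi ((Real.sqrt (2 * Real.pi))⁻¹ * Real.exp (-x ^ 2 / 2)) x := by
  unfold Phi
  exact (hasDerivAt_int x).const_mul ((Real.sqrt (2 * Real.pi))⁻¹)

lemma Phi_nonneg (x : ℝ) : 0 ≤ Phi x :=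
  mul_nonneg (inv_nonneg.2 (Real.sqrt_nonneg _))
    (MeasureTheory.setIntegral_nonneg measurableSet_Iic fun y _ => (Real.exp_pos _).le)

lemma integral_mul_gauss (x : ℝ) :
    ∫ y in Set.Iic x, y * Real.exp (-y ^ 2 / 2) = -Real.exp (-x ^ 2 / 2) := by
  have hderiv : ∀ y : ℝ, HasDerivAt (fun t : ℝ => -Real.exp (-t ^ 2 / 2))
      (y * Real.exp (-y ^ 2 / 2)) y := by
    intro y
    have h1 : HasDerivAt (fun t : ℝ => -t ^ 2 / 2) (-y) y := by
      have h := ((hasDerivAt_pow 2 y).neg).div_const 2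
      norm_num at h
      rwa [show (-(2*y)/2 : ℝ) = -y from by ring] at h
    have h := h1.exp.neg
    rwa [show -(Real.exp (-y ^ 2 / 2) * -y) = y * Real.exp (-y ^ 2 / 2) from by ring] at h
  have hint : IntegrableOn (fun y : ℝ => y * Real.exp (-y ^ 2 / 2)) (Set.Iic x) := by
    have h := integrable_mul_exp_neg_mul_sq (by norm_num : (0:ℝ) < 1/2)
    have he : (fun y : ℝ => y * Real.exp (-y ^ 2 / 2)) =
        fun y : ℝ => y * Real.exp (-(1/2) * y ^ 2) := by
      funext y; rw [show -y ^ 2 / 2 = -(1/2) * y ^ 2 by ring]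
    rw [he]; exact h.integrableOn
  have hsq : Tendsto (fun t : ℝ => t ^ 2) atBot atTop := by
    have := (tendsto_pow_atTop (α := ℝ) (by norm_num : (2:ℕ) ≠ 0)).comp tendsto_neg_atBot_atTop
    have h2 : ((fun x : ℝ => x ^ 2) ∘ Neg.neg) = fun t : ℝ => t ^ 2 := by
      funext t; simp [Function.comp]
    rwa [h2] at this
  have htend : Tendsto (fun t : ℝ => -Real.exp (-t ^ 2 / 2)) atBot (𝓝 0) := by
    have h1 : Tendsto (fun t : ℝ => -t ^ 2 / 2) atBot atBot := by
      have := (tendsto_neg_atTop_atBot.comp hsq).atBot_div_const (by norm_num : (0:ℝ) < 2)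
      have h2 : (fun t : ℝ => (Neg.neg ∘ fun t : ℝ => t ^ 2) t / 2) = fun t : ℝ => -t ^ 2 / 2 := by
        funext t; simp [Function.comp]
      rwa [h2] at this
    have := (Real.tendsto_exp_atBot.comp h1).neg
    simpa using this
  have := MeasureTheory.integral_Iic_of_hasDerivAt_of_tendsto' (fun y _ => hderiv y) hint htend
  simpa using this

lemma mill {x : ℝ} (hx : x < 0) :
    (∫ y in Set.Iic x, Real.exp (-y ^ 2 / 2)) ≤ Real.exp (-x ^ 2 / 2) / (-x) := by
  have hint1 : IntegrableOn (fun y : ℝ => Real.exp (-y ^ 2 / 2)) (Set.Iic x) :=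
    gauss_int.integrableOn
  have hint' : IntegrableOn (fun y : ℝ => y * Real.exp (-y ^ 2 / 2)) (Set.Iic x) := by
    have h := integrable_mul_exp_neg_mul_sq (by norm_num : (0:ℝ) < 1/2)
    have he : (fun y : ℝ => y * Real.exp (-y ^ 2 / 2)) =
        fun y : ℝ => y * Real.exp (-(1/2) * y ^ 2) := by
      funext y; rw [show -y ^ 2 / 2 = -(1/2) * y ^ 2 by ring]
    rw [he]; exact h.integrableOn
  have hmono : ∀ y ∈ Set.Iic x, Real.exp (-y ^ 2 / 2) ≤ x⁻¹ * (y * Real.exp (-y ^ 2 / 2)) := by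
    intro y hy
    have hy' : y ≤ x := hy
    have hxinv : x⁻¹ < 0 := inv_lt_zero.2 hx
    have h1 : (1:ℝ) ≤ x⁻¹ * y := by
      have h2 : x⁻¹ * x ≤ x⁻¹ * y := mul_le_mul_of_nonpos_left hy' hxinv.le
      rwa [inv_mul_cancel₀ (ne_of_lt hx)] at h2
    calc Real.exp (-y ^ 2 / 2) ≤ (x⁻¹ * y) * Real.exp (-y ^ 2 / 2) :=
          le_mul_of_one_le_left (Real.exp_pos _).le h1
      _ = x⁻¹ * (y * Real.exp (-y ^ 2 / 2)) := by ring
  have hle := MeasureTheory.setIntegral_mono_on hint1 (hint'.const_mul x⁻¹)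
    measurableSet_Iic hmono
  rw [MeasureTheory.integral_const_mul, integral_mul_gauss] at hle
  have heq : x⁻¹ * -Real.exp (-x ^ 2 / 2) = Real.exp (-x ^ 2 / 2) / (-x) := by
    field_simp
  linarith [hle]

lemma exp_key (s : ℝ) (hs : 0 < s) (ℓ : ℝ) :
    Real.exp (ℓ ^ 2 * (s - 1) / 2) *
      Real.exp (-(ℓ * (1 / (2 * Real.sqrt s) - Real.sqrt s)) ^ 2 / 2) =
    Real.exp (-ℓ ^ 2 / (8 * s)) := by
  have hsq : Real.sqrt s ^ 2 = s := Real.sq_sqrt hs.le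
  have hs0 : Real.sqrt s ≠ 0 := (Real.sqrt_pos.2 hs).ne'
  have h4s : (2 * Real.sqrt s) ^ 2 = 4 * s := by rw [mul_pow, hsq]; norm_num
  have hmid : 2 * (1 / (2 * Real.sqrt s)) * Real.sqrt s = 1 := by field_simp
  have hexp : (1 / (2 * Real.sqrt s) - Real.sqrt s) ^ 2 = 1 / (4 * s) - 1 + s := by
    rw [sub_sq, div_pow, one_pow, h4s, hsq, hmid]
  rw [← Real.exp_add]
  congr 1
  rw [mul_pow, hexp]
  field_simp
  ring

lemma hasDerivAt_J (s : ℝ) (hs : 0 < s) (ℓ : ℝ) :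
    HasDerivAt (fun ℓ => J s ℓ)
      (-Real.sqrt s * ((Real.sqrt (2 * Real.pi))⁻¹ * Real.exp (-ℓ ^ 2 / (8 * s)))
        + ℓ * (s - 1) * Real.exp (ℓ ^ 2 * (s - 1) / 2) *
            Phi (ℓ * (1 / (2 * Real.sqrt s) - Real.sqrt s))) ℓ := by
  have hsq : Real.sqrt s ^ 2 = s := Real.sq_sqrt hs.le
  have hs0 : Real.sqrt s ≠ 0 := (Real.sqrt_pos.2 hs).ne'
  have h4s : (2 * Real.sqrt s) ^ 2 = 4 * s := by rw [mul_pow, hsq]; norm_num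
  have h1a : HasDerivAt (fun ℓ : ℝ => -ℓ / (2 * Real.sqrt s)) (-1 / (2 * Real.sqrt s)) ℓ := by
    simpa using ((hasDerivAt_id ℓ).neg.div_const (2 * Real.sqrt s))
  have h1 : HasDerivAt (fun ℓ : ℝ => Phi (-ℓ / (2 * Real.sqrt s)))
      (((Real.sqrt (2 * Real.pi))⁻¹ * Real.exp (-(-ℓ / (2 * Real.sqrt s)) ^ 2 / 2)) *
        (-1 / (2 * Real.sqrt s))) ℓ :=
    (hasDerivAt_Phi _).comp ℓ h1a
  have h2a : HasDerivAt (fun ℓ : ℝ => ℓ ^ 2 * (s - 1) / 2) (ℓ * (s - 1)) ℓ := by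
    have h := ((hasDerivAt_pow 2 ℓ).mul_const (s - 1)).div_const 2
    norm_num at h
    rwa [show (2 * ℓ * (s - 1) / 2 : ℝ) = ℓ * (s - 1) from by ring] at h
  have h2 : HasDerivAt (fun ℓ : ℝ => Real.exp (ℓ ^ 2 * (s - 1) / 2))
      (Real.exp (ℓ ^ 2 * (s - 1) / 2) * (ℓ * (s - 1))) ℓ := h2a.exp
  have h3a : HasDerivAt (fun ℓ : ℝ => ℓ * (1 / (2 * Real.sqrt s) - Real.sqrt s))
      (1 / (2 * Real.sqrt s) - Real.sqrt s) ℓ := by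
    simpa using (hasDerivAt_id ℓ).mul_const (1 / (2 * Real.sqrt s) - Real.sqrt s)
  have h3 : HasDerivAt (fun ℓ : ℝ => Phi (ℓ * (1 / (2 * Real.sqrt s) - Real.sqrt s)))
      (((Real.sqrt (2 * Real.pi))⁻¹ *
        Real.exp (-(ℓ * (1 / (2 * Real.sqrt s) - Real.sqrt s)) ^ 2 / 2)) *
        (1 / (2 * Real.sqrt s) - Real.sqrt s)) ℓ :=
    (hasDerivAt_Phi _).comp ℓ h3a
  have h := h1.add (h2.mul h3)
  have hfun : (fun ℓ : ℝ => J s ℓ) = fun ℓ : ℝ => Phi (-ℓ / (2 * Real.sqrt s)) +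
      Real.exp (ℓ ^ 2 * (s - 1) / 2) * Phi (ℓ * (1 / (2 * Real.sqrt s) - Real.sqrt s)) := rfl
  rw [hfun]
  refine HasDerivAt.congr_deriv h ?_
  symm
  have A1 : Real.exp (-(-ℓ / (2 * Real.sqrt s)) ^ 2 / 2) = Real.exp (-ℓ ^ 2 / (8 * s)) := by
    congr 1
    rw [div_pow, neg_sq, h4s]
    field_simp
    ring
  have A2 := exp_key s hs ℓ
  have A3 : -1 / (2 * Real.sqrt s) + (1 / (2 * Real.sqrt s) - Real.sqrt s) = -Real.sqrt s := by
    ring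
  rw [A1]
  linear_combination ((Real.sqrt (2 * Real.pi))⁻¹ * (Real.sqrt s - 1 / (2 * Real.sqrt s))) * A2

/-- For fixed `s > 0`, `ℓ ↦ J(s,ℓ)` is strictly decreasing on `(0,∞)`. -/
theorem J_strictAntiOn (s : ℝ) (hs : 0 < s) : StrictAntiOn (fun ℓ => J s ℓ) (Set.Ioi 0) := by
  have hsq : Real.sqrt s ^ 2 = s := Real.sq_sqrt hs.le
  have hs0 : Real.sqrt s ≠ 0 := (Real.sqrt_pos.2 hs).ne'
  have hsqrtpos : 0 < Real.sqrt s := Real.sqrt_pos.2 hs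
  apply strictAntiOn_of_deriv_neg (convex_Ioi 0)
  · exact fun x _ => (hasDerivAt_J s hs x).differentiableAt.continuousAt.continuousWithinAt
  · intro x hx
    rw [interior_Ioi] at hx
    have hx0 : 0 < x := hx
    rw [(hasDerivAt_J s hs x).deriv]
    have hApos : 0 < (Real.sqrt (2 * Real.pi))⁻¹ * Real.exp (-x ^ 2 / (8 * s)) := by
      have : 0 < 2 * Real.pi := by positivity
      positivity
    rcases le_or_gt s 1 with h1 | h1
    · have ht1 : x * (s - 1) ≤ 0 := mul_nonpos_of_nonneg_of_nonpos hx0.le (by linarith)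
      have ht2 : x * (s - 1) * Real.exp (x ^ 2 * (s - 1) / 2) ≤ 0 :=
        mul_nonpos_of_nonpos_of_nonneg ht1 (Real.exp_pos _).le
      have hterm2 : x * (s - 1) * Real.exp (x ^ 2 * (s - 1) / 2) *
          Phi (x * (1 / (2 * Real.sqrt s) - Real.sqrt s)) ≤ 0 :=
        mul_nonpos_of_nonpos_of_nonneg ht2 (Phi_nonneg _)
      nlinarith [mul_pos hsqrtpos hApos]
    · have h2s1 : 0 < 2 * s - 1 := by linarith
      have hm : 1 / (2 * Real.sqrt s) - Real.sqrt s < 0 := by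
        rw [sub_neg, div_lt_iff₀ (by positivity)]
        nlinarith [hsq]
      have hxneg : x * (1 / (2 * Real.sqrt s) - Real.sqrt s) < 0 := mul_neg_of_pos_of_neg hx0 hm
      have hmill := mill hxneg
      have hC : (0:ℝ) < (Real.sqrt (2 * Real.pi))⁻¹ := by
        have : 0 < 2 * Real.pi := by positivity
        positivity
      have hPhiB : Phi (x * (1 / (2 * Real.sqrt s) - Real.sqrt s)) ≤
          (Real.sqrt (2 * Real.pi))⁻¹ *
            (Real.exp (-(x * (1 / (2 * Real.sqrt s) - Real.sqrt s)) ^ 2 / 2) /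
              (-(x * (1 / (2 * Real.sqrt s) - Real.sqrt s)))) :=
        mul_le_mul_of_nonneg_left hmill hC.le
      have hcpos : 0 < x * (s - 1) * Real.exp (x ^ 2 * (s - 1) / 2) :=
        mul_pos (mul_pos hx0 (by linarith)) (Real.exp_pos _)
      have hb := mul_le_mul_of_nonneg_left hPhiB hcpos.le
      have hnegx : -(x * (1 / (2 * Real.sqrt s) - Real.sqrt s)) =
          x * (2 * s - 1) / (2 * Real.sqrt s) := by
        have hss : Real.sqrt s * Real.sqrt s = s := Real.mul_self_sqrt hs.le
        have hmrw : 1 / (2*Real.sqrt s) - Real.sqrt s = (1 - 2*s)/(2*Real.sqrt s) := by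
          field_simp
          linear_combination -2 * hss
        rw [hmrw]; ring
      have hRHS : x * (s - 1) * Real.exp (x ^ 2 * (s - 1) / 2) *
          ((Real.sqrt (2 * Real.pi))⁻¹ *
            (Real.exp (-(x * (1 / (2 * Real.sqrt s) - Real.sqrt s)) ^ 2 / 2) /
              (-(x * (1 / (2 * Real.sqrt s) - Real.sqrt s))))) =
          ((Real.sqrt (2 * Real.pi))⁻¹ * Real.exp (-x ^ 2 / (8 * s))) *
            (2 * Real.sqrt s * (s - 1) / (2 * s - 1)) := by
        rw [hnegx]
        rw [show x * (s - 1) * Real.exp (x ^ 2 * (s - 1) / 2) *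
            ((Real.sqrt (2 * Real.pi))⁻¹ *
              (Real.exp (-(x * (1 / (2 * Real.sqrt s) - Real.sqrt s)) ^ 2 / 2) /
                (x * (2 * s - 1) / (2 * Real.sqrt s)))) =
            x * (s - 1) * (Real.exp (x ^ 2 * (s - 1) / 2) *
              Real.exp (-(x * (1 / (2 * Real.sqrt s) - Real.sqrt s)) ^ 2 / 2)) *
              ((Real.sqrt (2 * Real.pi))⁻¹ / (x * (2 * s - 1) / (2 * Real.sqrt s))) from by ring,
          exp_key s hs x]
        field_simp [hx0.ne', h2s1.ne']
      have hfin : -Real.sqrt s * ((Real.sqrt (2 * Real.pi))⁻¹ * Real.exp (-x ^ 2 / (8 * s))) +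
          ((Real.sqrt (2 * Real.pi))⁻¹ * Real.exp (-x ^ 2 / (8 * s))) *
            (2 * Real.sqrt s * (s - 1) / (2 * s - 1)) < 0 := by
        have heq : -Real.sqrt s * ((Real.sqrt (2 * Real.pi))⁻¹ * Real.exp (-x ^ 2 / (8 * s))) +
            ((Real.sqrt (2 * Real.pi))⁻¹ * Real.exp (-x ^ 2 / (8 * s))) *
              (2 * Real.sqrt s * (s - 1) / (2 * s - 1)) =
            -(((Real.sqrt (2 * Real.pi))⁻¹ * Real.exp (-x ^ 2 / (8 * s))) * Real.sqrt s /
              (2 * s - 1)) := by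
          field_simp [h2s1.ne']
          ring
        rw [heq, neg_lt_zero]
        exact div_pos (mul_pos hApos hsqrtpos) h2s1
      linarith [hb, hRHS.le, hRHS.ge]
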